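/- Let n ≥ 3. Define T by: T_1(δ_l, l, l) = w(l) and T_1 = 0 otherwise; for 1 ≤ h ≤ n−2 and κ(l) ≥ 1, T_{h+1}(κ, t₀, l) = Σ_{t : (κ−δ_l)(t) ≥ 1} T_h(κ−δ_l, t₀, t) · w(l) · r̃(t)(l) · ∏_i r(i)(l)^{(κ−δ_l−δ_t)(i)}; and at the last step, T_n(κ, t₀, l) = Σ_{t} T_{n−1}(κ−δ_l, t₀, t) · w(l) · r̃(t)(l) · r̃(l)(t₀) · ∏_i r(i)(l)^{(κ−δ_l−δ_t−δ_{t₀})(i)}, the sum over t for which κ−δ_l−δ_t−δ_{t₀} is componentwise nonnegative. Then for every κ with Σ_i κ(i) = n and every t₀, t ∈ Fin p: T_n(κ, t₀, t) = Σ over all c : Fin n → Fin p with config(c) = κ, c(0) = t₀ and c(n−1) = t of W°_n(c). -/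
import Mathlib


open Finset

/-- The cell configuration of a cell assignment. -/
def cellConfig {p n : ℕ} (c : Fin n → Fin p) : Fin p → ℕ :=
  fun i => (Finset.univ.filter (fun a => c a = i)).card

/-- The indicator vector `δ_l`. -/
def delta {p : ℕ} (l : Fin p) : Fin p → ℕ := fun i => if i = l then 1 else 0

/-- The cyclic weight `W°` of a cell assignment: cyclically consecutive positions
(including the wrap-around pair) contribute `r̃`-factors and all other ordered
pairs contribute `r`-factors. -/
def cycW {R : Type*} [CommRing R] {p n : ℕ} (w : Fin p → R)
    (r : Fin p → Fin p → R) (rt : Fin p → Fin p → R) (c : Fin n → Fin p) : R :=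
  (∏ a, w (c a)) *
    (∏ a : Fin n, ∏ b ∈ Finset.univ.filter
        (fun b : Fin n => (a : ℕ) < (b : ℕ) ∧ (b : ℕ) ≠ (a : ℕ) + 1 ∧
          ¬((a : ℕ) = 0 ∧ (b : ℕ) = n - 1)),
      r (c a) (c b)) *
    (∏ a : Fin n, ∏ b ∈ Finset.univ.filter (fun b : Fin n => (b : ℕ) = (a : ℕ) + 1),
      rt (c a) (c b)) *
    (if hn : 0 < n then rt (c ⟨n - 1, by omega⟩) (c ⟨0, hn⟩) else 1)

/-- The dynamic-programming table for the cyclic predecessor relation,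
before the last step: it also records the cell of the first element. -/
def Tc {R : Type*} [CommRing R] {p : ℕ} (w : Fin p → R) (r : Fin p → Fin p → R)
    (rt : Fin p → Fin p → R) : ℕ → (Fin p → ℕ) → Fin p → Fin p → R
  | 0, _, _, _ => 0
  | 1, κ, t0, t => if κ = delta t ∧ t0 = t then w t else 0
  | h + 2, κ, t0, l =>
      if 1 ≤ κ l then
        ∑ t ∈ Finset.univ.filter (fun t : Fin p => 1 ≤ (κ - delta l) t),
          Tc w r rt (h + 1) (κ - delta l) t0 t * w l * rt t l *
            ∏ i, r i l ^ ((κ - delta l - delta t) i)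
      else 0

/-- The last step of the dynamic program for the cyclic predecessor relation:
`T_n(κ, t₀, l) = ∑_t T_{n-1}(κ-δ_l, t₀, t) * w l * r̃ t l * r̃ l t₀ *
∏ i, r i l ^ ((κ-δ_l-δ_t-δ_{t₀}) i)`, the sum over those `t` for which
`κ - δ_l - δ_t - δ_{t₀}` is componentwise nonnegative. -/
def TcLast {R : Type*} [CommRing R] {p : ℕ} (w : Fin p → R) (r : Fin p → Fin p → R)
    (rt : Fin p → Fin p → R) (n : ℕ) (κ : Fin p → ℕ) (t0 l : Fin p) : R :=
  ∑ t ∈ Finset.univ.filter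
      (fun t : Fin p => ∀ i, delta l i + delta t i + delta t0 i ≤ κ i),
    Tc w r rt (n - 1) (κ - delta l) t0 t * w l * rt t l * rt l t0 *
      ∏ i, r i l ^ ((κ - delta l - delta t - delta t0) i)

section helpers
variable {R : Type*} [CommRing R] {p : ℕ}

lemma cellConfig_eq_sum {n : ℕ} (c : Fin n → Fin p) (i : Fin p) :
    cellConfig c i = ∑ a, if c a = i then 1 else 0 := Finset.card_filter _ _

lemma cellConfig_snoc {m : ℕ} (c : Fin m → Fin p) (l : Fin p) :
    cellConfig (Fin.snoc c l : Fin (m+1) → Fin p) = cellConfig c + delta l := by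
  funext i
  simp only [Pi.add_apply, cellConfig_eq_sum, delta, Fin.sum_univ_castSucc,
    Fin.snoc_castSucc, Fin.snoc_last]
  congr 1
  simp [eq_comm]

lemma prod_comp_eq_prod_pow {n : ℕ} (c : Fin n → Fin p) (s : Finset (Fin n)) (f : Fin p → R) :
    ∏ a ∈ s, f (c a) = ∏ i, f i ^ (s.filter (fun a => c a = i)).card := by
  rw [← Finset.prod_fiberwise_of_maps_to (g := c) (fun a _ => mem_univ (c a)) (fun a => f (c a))]
  refine Finset.prod_congr rfl fun i _ => ?_
  rw [Finset.prod_congr rfl (fun a ha => congrArg f (mem_filter.mp ha).2), Finset.prod_const]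

lemma card_filter_erase {n : ℕ} (c : Fin n → Fin p) (a0 : Fin n) (i : Fin p) :
    (univ.filter (fun a => c a = i ∧ a ≠ a0)).card = cellConfig c i - delta (c a0) i := by
  have h : univ.filter (fun a => c a = i ∧ a ≠ a0)
      = (univ.filter (fun a => c a = i)).erase a0 := by
    ext a; simp [and_comm]
  rw [h]
  by_cases hc : c a0 = i
  · rw [Finset.card_erase_of_mem (by simp [hc])]
    simp [cellConfig, delta, eq_comm, hc]
  · rw [Finset.erase_eq_of_notMem (by simp [hc])]
    simp [cellConfig, delta, if_neg (mt Eq.symm hc)]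

lemma card_filter_erase2 {n : ℕ} (c : Fin n → Fin p) {a0 a1 : Fin n} (h01 : a0 ≠ a1) (i : Fin p) :
    (univ.filter (fun a => c a = i ∧ a ≠ a0 ∧ a ≠ a1)).card
      = cellConfig c i - delta (c a0) i - delta (c a1) i := by
  have h : univ.filter (fun a => c a = i ∧ a ≠ a0 ∧ a ≠ a1)
      = (univ.filter (fun a => c a = i ∧ a ≠ a0)).erase a1 := by
    ext a; simp; tauto
  rw [h]
  by_cases hc : c a1 = i
  · rw [Finset.card_erase_of_mem (by simp [hc, h01.symm]), card_filter_erase]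
    simp [delta, eq_comm, hc]
  · rw [Finset.erase_eq_of_notMem (by simp [hc]), card_filter_erase]
    simp [delta, if_neg (mt Eq.symm hc)]

end helpers

section linW
variable {R : Type*} [CommRing R] {p : ℕ}

def linW (w : Fin p → R) (r rt : Fin p → Fin p → R) {n : ℕ} (c : Fin n → Fin p) : R :=
  (∏ a, w (c a)) *
    (∏ a : Fin n, ∏ b : Fin n,
      if (a : ℕ) < (b : ℕ) ∧ (b : ℕ) ≠ (a : ℕ) + 1 then r (c a) (c b) else 1) *
    (∏ a : Fin n, ∏ b : Fin n, if (b : ℕ) = (a : ℕ) + 1 then rt (c a) (c b) else 1)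

lemma linW_one (w : Fin p → R) (r rt : Fin p → Fin p → R) (c : Fin 1 → Fin p) :
    linW w r rt c = w (c 0) := by
  simp [linW]

lemma prod_w_snoc {m : ℕ} (w : Fin p → R) (c : Fin (m+1) → Fin p) (l : Fin p) :
    (∏ a : Fin (m+2), w ((Fin.snoc c l : Fin (m+2) → Fin p) a)) = (∏ a : Fin (m+1), w (c a)) * w l := by
  rw [Fin.prod_univ_castSucc (f := fun a : Fin (m+2) => w ((Fin.snoc c l : Fin (m+2) → Fin p) a))]
  simp

lemma prod_r_snoc {m : ℕ} (r : Fin p → Fin p → R) (c : Fin (m+1) → Fin p) (l : Fin p) :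
    (∏ a : Fin (m+2), ∏ b : Fin (m+2),
        if (a : ℕ) < (b : ℕ) ∧ (b : ℕ) ≠ (a : ℕ) + 1
        then r ((Fin.snoc c l : Fin (m+2) → Fin p) a) ((Fin.snoc c l : Fin (m+2) → Fin p) b) else 1)
      = (∏ a : Fin (m+1), ∏ b : Fin (m+1),
          if (a : ℕ) < (b : ℕ) ∧ (b : ℕ) ≠ (a : ℕ) + 1 then r (c a) (c b) else 1) *
        ∏ a : Fin (m+1), if (a : ℕ) ≠ m then r (c a) l else 1 := by
  rw [Fin.prod_univ_castSucc (f := fun a : Fin (m+2) => ∏ b : Fin (m+2),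
    if (a : ℕ) < (b : ℕ) ∧ (b : ℕ) ≠ (a : ℕ) + 1
    then r ((Fin.snoc c l : Fin (m+2) → Fin p) a) ((Fin.snoc c l : Fin (m+2) → Fin p) b) else 1)]
  have hlastrow : (∏ b : Fin (m+2),
      if ((Fin.last (m+1) : ℕ)) < (b : ℕ) ∧ (b : ℕ) ≠ ((Fin.last (m+1) : ℕ)) + 1
      then r ((Fin.snoc c l : Fin (m+2) → Fin p) (Fin.last (m+1))) ((Fin.snoc c l : Fin (m+2) → Fin p) b) else 1) = 1 :=
    Finset.prod_eq_one fun b _ => by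
      rw [if_neg]; have := b.isLt; simp only [Fin.val_last]; omega
  rw [hlastrow, mul_one]
  rw [Finset.prod_congr rfl (fun a _ => Fin.prod_univ_castSucc (f := fun b : Fin (m+2) =>
    if ((a.castSucc : ℕ)) < (b : ℕ) ∧ (b : ℕ) ≠ ((a.castSucc : ℕ)) + 1
    then r ((Fin.snoc c l : Fin (m+2) → Fin p) a.castSucc) ((Fin.snoc c l : Fin (m+2) → Fin p) b) else 1))]
  rw [Finset.prod_mul_distrib]
  congr 1
  · exact Finset.prod_congr rfl fun a _ => Finset.prod_congr rfl fun b _ => by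
      simp [Fin.snoc_castSucc]
  · refine Finset.prod_congr rfl fun a _ => ?_
    have ha := a.isLt
    simp only [Fin.snoc_castSucc, Fin.snoc_last, Fin.coe_castSucc, Fin.val_last]
    by_cases h : (a : ℕ) = m
    · rw [if_neg (by omega), if_neg (by omega)]
    · rw [if_pos (by omega), if_pos (by omega)]

lemma prod_rt_snoc {m : ℕ} (rt : Fin p → Fin p → R) (c : Fin (m+1) → Fin p) (l : Fin p) :
    (∏ a : Fin (m+2), ∏ b : Fin (m+2),
        if (b : ℕ) = (a : ℕ) + 1 then rt ((Fin.snoc c l : Fin (m+2) → Fin p) a) ((Fin.snoc c l : Fin (m+2) → Fin p) b) else 1)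
      = (∏ a : Fin (m+1), ∏ b : Fin (m+1),
          if (b : ℕ) = (a : ℕ) + 1 then rt (c a) (c b) else 1) * rt (c (Fin.last m)) l := by
  rw [Fin.prod_univ_castSucc (f := fun a : Fin (m+2) => ∏ b : Fin (m+2),
    if (b : ℕ) = (a : ℕ) + 1 then rt ((Fin.snoc c l : Fin (m+2) → Fin p) a) ((Fin.snoc c l : Fin (m+2) → Fin p) b) else 1)]
  have hlastrow : (∏ b : Fin (m+2),
      if (b : ℕ) = ((Fin.last (m+1) : ℕ)) + 1
      then rt ((Fin.snoc c l : Fin (m+2) → Fin p) (Fin.last (m+1))) ((Fin.snoc c l : Fin (m+2) → Fin p) b) else 1) = 1 :=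
    Finset.prod_eq_one fun b _ => by
      rw [if_neg]; have := b.isLt; simp only [Fin.val_last]; omega
  rw [hlastrow, mul_one]
  rw [Finset.prod_congr rfl (fun a _ => Fin.prod_univ_castSucc (f := fun b : Fin (m+2) =>
    if (b : ℕ) = ((a.castSucc : ℕ)) + 1
    then rt ((Fin.snoc c l : Fin (m+2) → Fin p) a.castSucc) ((Fin.snoc c l : Fin (m+2) → Fin p) b) else 1))]
  rw [Finset.prod_mul_distrib]
  congr 1
  · exact Finset.prod_congr rfl fun a _ => Finset.prod_congr rfl fun b _ => by
      simp [Fin.snoc_castSucc]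
  · have key : ∀ a : Fin (m+1),
        (if ((Fin.last (m+1) : ℕ)) = ((a.castSucc : ℕ)) + 1
         then rt ((Fin.snoc c l : Fin (m+2) → Fin p) a.castSucc) ((Fin.snoc c l : Fin (m+2) → Fin p) (Fin.last (m+1))) else 1)
        = if a = Fin.last m then rt (c a) l else 1 := by
      intro a
      simp only [Fin.snoc_castSucc, Fin.snoc_last, Fin.coe_castSucc, Fin.val_last]
      by_cases h : a = Fin.last m
      · rw [if_pos (by simp [h, Fin.val_last]), if_pos h]
      · rw [if_neg (by
          have : (a : ℕ) ≠ m := fun hc => h (Fin.ext (by simp [hc, Fin.val_last]))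
          omega), if_neg h]
    rw [Finset.prod_congr rfl fun a _ => key a]
    simp

lemma linW_snoc {m : ℕ} (w : Fin p → R) (r rt : Fin p → Fin p → R)
    (c : Fin (m+1) → Fin p) (l : Fin p) :
    linW w r rt (Fin.snoc c l : Fin (m+2) → Fin p)
      = linW w r rt c * w l * rt (c (Fin.last m)) l *
        ∏ a : Fin (m+1), if (a : ℕ) ≠ m then r (c a) l else 1 := by
  unfold linW
  rw [prod_w_snoc, prod_r_snoc, prod_rt_snoc]
  ring

end linW

section lin
variable {R : Type*} [CommRing R] {p : ℕ}

lemma cellConfig_one (c : Fin 1 → Fin p) : cellConfig c = delta (c 0) := by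
  funext i
  rw [cellConfig_eq_sum]
  simp only [Fin.sum_univ_one, delta]
  exact if_congr eq_comm rfl rfl

lemma snoc_zero' {m : ℕ} (c : Fin (m+1) → Fin p) (l : Fin p) :
    (Fin.snoc c l : Fin (m+2) → Fin p) 0 = c 0 := by
  rw [← Fin.castSucc_zero, Fin.snoc_castSucc]

lemma sum_snoc_filter {m : ℕ} (f : (Fin (m+2) → Fin p) → R)
    (P : (Fin (m+2) → Fin p) → Prop) [DecidablePred P] (l : Fin p) :
    ∑ c ∈ univ.filter (fun c => P c ∧ c (Fin.last (m+1)) = l), f c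
      = ∑ c' ∈ univ.filter (fun c' : Fin (m+1) → Fin p => P (Fin.snoc c' l)),
          f (Fin.snoc c' l) := by
  refine Finset.sum_nbij' (i := fun c => Fin.init c) (j := fun c' => Fin.snoc c' l)
    ?_ ?_ ?_ ?_ ?_
  · intro c hc
    simp only [mem_filter, mem_univ, true_and] at hc ⊢
    rw [← hc.2, Fin.snoc_init_self]
    exact hc.1
  · intro c' hc'
    simp only [mem_filter, mem_univ, true_and] at hc' ⊢
    exact ⟨hc', Fin.snoc_last _ _⟩
  · intro c hc
    simp only [mem_filter, mem_univ, true_and] at hc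
    show Fin.snoc (Fin.init c) l = c
    rw [← hc.2]
    exact Fin.snoc_init_self c
  · intro c' _
    exact Fin.init_snoc _ _
  · intro c hc
    simp only [mem_filter, mem_univ, true_and] at hc
    rw [← hc.2, Fin.snoc_init_self]

lemma prod_ite_ne {k : ℕ} (c : Fin k → Fin p) (a0 : Fin k) (f : Fin p → R) :
    (∏ a : Fin k, if a ≠ a0 then f (c a) else 1)
      = ∏ i, f i ^ (cellConfig c i - delta (c a0) i) := by
  rw [← Finset.prod_filter, prod_comp_eq_prod_pow]
  refine Finset.prod_congr rfl fun i _ => ?_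
  rw [Finset.filter_filter, ← card_filter_erase c a0 i]
  congr 1
  congr 1
  ext a
  simp only [Finset.mem_filter, Finset.mem_univ, true_and]
  tauto

lemma prod_ite_ne2 {k : ℕ} (c : Fin k → Fin p) {a0 a1 : Fin k} (h01 : a0 ≠ a1) (f : Fin p → R) :
    (∏ a : Fin k, if a ≠ a0 ∧ a ≠ a1 then f (c a) else 1)
      = ∏ i, f i ^ (cellConfig c i - delta (c a0) i - delta (c a1) i) := by
  rw [← Finset.prod_filter, prod_comp_eq_prod_pow]
  refine Finset.prod_congr rfl fun i _ => ?_
  rw [Finset.filter_filter, ← card_filter_erase2 c h01 i]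
  congr 1
  congr 1
  ext a
  simp only [Finset.mem_filter, Finset.mem_univ, true_and]
  tauto

end lin

section linmain
variable {R : Type*} [CommRing R] {p : ℕ}

lemma config_snoc_iff {m : ℕ} (κ : Fin p → ℕ) (l : Fin p) (hκl : 1 ≤ κ l)
    (c' : Fin (m+1) → Fin p) :
    cellConfig (Fin.snoc c' l : Fin (m+2) → Fin p) = κ ↔ cellConfig c' = κ - delta l := by
  rw [cellConfig_snoc, funext_iff, funext_iff]
  constructor <;> intro h i <;> have hi := h i <;>
    simp only [Pi.add_apply, Pi.sub_apply, delta] at hi ⊢ <;>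
    by_cases hil : i = l <;> simp [hil] at hi ⊢ <;> omega

lemma Tc_eq (w : Fin p → R) (r rt : Fin p → Fin p → R) :
    ∀ (m : ℕ) (κ : Fin p → ℕ) (t0 t : Fin p),
    Tc w r rt (m+1) κ t0 t =
      ∑ c ∈ univ.filter (fun c : Fin (m+1) → Fin p =>
        cellConfig c = κ ∧ c 0 = t0 ∧ c (Fin.last m) = t), linW w r rt c := by
  intro m
  induction m with
  | zero =>
      intro κ t0 t
      show (if κ = delta t ∧ t0 = t then w t else 0) = _
      by_cases h : κ = delta t ∧ t0 = t
      · rw [if_pos h]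
        have hset : univ.filter (fun c : Fin 1 → Fin p =>
            cellConfig c = κ ∧ c 0 = t0 ∧ c (Fin.last 0) = t) = {fun _ => t} := by
          ext c
          simp only [mem_filter, mem_univ, true_and, Finset.mem_singleton]
          constructor
          · rintro ⟨h1, h2, h3⟩
            funext a
            rw [Subsingleton.elim a (Fin.last 0)]
            exact h3
          · rintro rfl
            refine ⟨?_, ?_, rfl⟩
            · rw [cellConfig_one]; exact h.1.symm
            · exact h.2.symm
        rw [hset, Finset.sum_singleton, linW_one]
      · rw [if_neg h]
        symm
        rw [Finset.filter_eq_empty_iff.mpr, Finset.sum_empty]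
        rintro c - ⟨h1, h2, h3⟩
        refine h ⟨?_, ?_⟩
        · rw [← h1, cellConfig_one, show c 0 = t from h3]
        · rw [← h2, show c 0 = t from h3]
  | succ m ih =>
      intro κ t0 l
      show (if 1 ≤ κ l then
          ∑ t' ∈ Finset.univ.filter (fun t' : Fin p => 1 ≤ (κ - delta l) t'),
            Tc w r rt (m + 1) (κ - delta l) t0 t' * w l * rt t' l *
              ∏ i, r i l ^ ((κ - delta l - delta t') i)
        else 0) = _
      by_cases hκl : 1 ≤ κ l
      case neg =>
        rw [if_neg hκl]
        symm
        rw [Finset.filter_eq_empty_iff.mpr, Finset.sum_empty]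
        rintro c - ⟨h1, h2, h3⟩
        refine hκl ?_
        rw [← h1]
        refine Finset.card_pos.mpr ⟨Fin.last (m+1), ?_⟩
        simp [h3]
      case pos =>
        rw [if_pos hκl]
        -- reindex RHS over snoc
        have hre := sum_snoc_filter (p := p) (linW w r rt)
          (fun c : Fin (m+2) → Fin p => cellConfig c = κ ∧ c 0 = t0) l
        rw [show (Finset.filter (fun c : Fin (m+2) → Fin p =>
            cellConfig c = κ ∧ c 0 = t0 ∧ c (Fin.last (m+1)) = l) univ)
          = Finset.filter (fun c : Fin (m+2) → Fin p =>
            (cellConfig c = κ ∧ c 0 = t0) ∧ c (Fin.last (m+1)) = l) univ from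
          Finset.filter_congr fun c _ => by tauto]
        rw [hre]
        -- rewrite the predicate on c'
        rw [Finset.filter_congr (fun c' (_ : c' ∈ univ) => show _ ↔
            (cellConfig c' = κ - delta l ∧ c' 0 = t0) from
          and_congr (config_snoc_iff κ l hκl c') (by rw [snoc_zero']))]
        -- rewrite each summand via linW_snoc
        rw [Finset.sum_congr rfl (fun c' _ => linW_snoc w r rt c' l)]
        -- group by value at last position
        rw [← Finset.sum_fiberwise_of_maps_to (g := fun c' : Fin (m+1) → Fin p =>
          c' (Fin.last m)) (fun c' _ => mem_univ _) _]
        -- extend the t'-filter to univ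
        rw [Finset.sum_subset (Finset.filter_subset _ univ) (fun t' _ ht' => by
          rw [ih]
          have : Finset.filter (fun c : Fin (m+1) → Fin p =>
              cellConfig c = κ - delta l ∧ c 0 = t0 ∧ c (Fin.last m) = t') univ = ∅ := by
            rw [Finset.filter_eq_empty_iff]
            rintro c - ⟨h1, h2, h3⟩
            have hpos : 1 ≤ (κ - delta l) t' := by
              rw [← h1]
              exact Finset.card_pos.mpr ⟨Fin.last m, by simp [h3]⟩
            simp only [Finset.mem_filter, Finset.mem_univ, true_and] at ht'
            exact ht' hpos
          rw [this, Finset.sum_empty, zero_mul, zero_mul, zero_mul])]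
        refine Finset.sum_congr rfl fun t' _ => ?_
        rw [ih, Finset.sum_mul, Finset.sum_mul, Finset.sum_mul]
        rw [Finset.filter_filter]
        refine Finset.sum_congr ?_ fun c' hc' => ?_
        · ext c'
          simp only [Finset.mem_filter, Finset.mem_univ, true_and]
          tauto
        simp only [Finset.mem_filter, Finset.mem_univ, true_and] at hc'
        obtain ⟨⟨h1, h2⟩, h3⟩ := hc'
        rw [h3]
        congr 1
        symm
        rw [Finset.prod_congr rfl (fun (a : Fin (m+1)) _ => if_congr
          (not_congr (show ((a : ℕ) = m) ↔ a = Fin.last m by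
            rw [Fin.ext_iff, Fin.val_last])) rfl rfl)]
        rw [prod_ite_ne c' (Fin.last m) (fun i => r i l)]
        refine Finset.prod_congr rfl fun i _ => ?_
        rw [h1, h3]
        rfl

end linmain

section cyc
variable {R : Type*} [CommRing R] {p : ℕ}

lemma prod_rcyc_snoc {m : ℕ} (r : Fin p → Fin p → R) (c : Fin (m+1) → Fin p) (l : Fin p) :
    (∏ a : Fin (m+2), ∏ b : Fin (m+2),
        if (a : ℕ) < (b : ℕ) ∧ (b : ℕ) ≠ (a : ℕ) + 1 ∧ ¬((a : ℕ) = 0 ∧ (b : ℕ) = (m+2) - 1)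
        then r ((Fin.snoc c l : Fin (m+2) → Fin p) a) ((Fin.snoc c l : Fin (m+2) → Fin p) b)
        else 1)
      = (∏ a : Fin (m+1), ∏ b : Fin (m+1),
          if (a : ℕ) < (b : ℕ) ∧ (b : ℕ) ≠ (a : ℕ) + 1 then r (c a) (c b) else 1) *
        ∏ a : Fin (m+1), if (a : ℕ) ≠ m ∧ (a : ℕ) ≠ 0 then r (c a) l else 1 := by
  rw [Fin.prod_univ_castSucc (f := fun a : Fin (m+2) => ∏ b : Fin (m+2),
    if (a : ℕ) < (b : ℕ) ∧ (b : ℕ) ≠ (a : ℕ) + 1 ∧ ¬((a : ℕ) = 0 ∧ (b : ℕ) = (m+2) - 1)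
    then r ((Fin.snoc c l : Fin (m+2) → Fin p) a) ((Fin.snoc c l : Fin (m+2) → Fin p) b)
    else 1)]
  have hlastrow : (∏ b : Fin (m+2),
      if ((Fin.last (m+1) : ℕ)) < (b : ℕ) ∧ (b : ℕ) ≠ ((Fin.last (m+1) : ℕ)) + 1 ∧
          ¬(((Fin.last (m+1) : ℕ)) = 0 ∧ (b : ℕ) = (m+2) - 1)
      then r ((Fin.snoc c l : Fin (m+2) → Fin p) (Fin.last (m+1)))
             ((Fin.snoc c l : Fin (m+2) → Fin p) b) else 1) = 1 :=
    Finset.prod_eq_one fun b _ => by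
      rw [if_neg]; have := b.isLt; simp only [Fin.val_last]; omega
  rw [hlastrow, mul_one]
  rw [Finset.prod_congr rfl (fun a (_ : a ∈ univ) => Fin.prod_univ_castSucc
    (f := fun b : Fin (m+2) =>
      if ((a.castSucc : ℕ)) < (b : ℕ) ∧ (b : ℕ) ≠ ((a.castSucc : ℕ)) + 1 ∧
          ¬(((a.castSucc : ℕ)) = 0 ∧ (b : ℕ) = (m+2) - 1)
      then r ((Fin.snoc c l : Fin (m+2) → Fin p) a.castSucc)
             ((Fin.snoc c l : Fin (m+2) → Fin p) b) else 1))]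
  rw [Finset.prod_mul_distrib]
  congr 1
  · refine Finset.prod_congr rfl fun a _ => Finset.prod_congr rfl fun b _ => ?_
    have hb := b.isLt
    simp only [Fin.snoc_castSucc, Fin.coe_castSucc]
    exact if_congr (by omega) rfl rfl
  · refine Finset.prod_congr rfl fun a _ => ?_
    have ha := a.isLt
    simp only [Fin.snoc_castSucc, Fin.snoc_last, Fin.coe_castSucc, Fin.val_last]
    exact if_congr (by omega) rfl rfl

lemma cycW_snoc {m : ℕ} (w : Fin p → R) (r rt : Fin p → Fin p → R)
    (c : Fin (m+1) → Fin p) (l : Fin p) :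
    cycW w r rt (Fin.snoc c l : Fin (m+2) → Fin p)
      = linW w r rt c * w l * rt (c (Fin.last m)) l * rt l (c 0) *
        ∏ a : Fin (m+1), if (a : ℕ) ≠ m ∧ (a : ℕ) ≠ 0 then r (c a) l else 1 := by
  unfold cycW
  rw [dif_pos (by omega : 0 < m + 2)]
  simp only [Finset.prod_filter]
  rw [prod_w_snoc, prod_rt_snoc, prod_rcyc_snoc]
  rw [show ((⟨m + 2 - 1, by omega⟩ : Fin (m+2))) = Fin.last (m+1) from Fin.ext (by simp),
    show ((⟨0, by omega⟩ : Fin (m+2))) = Fin.castSucc 0 from Fin.ext (by simp),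
    Fin.snoc_last, Fin.snoc_castSucc]
  unfold linW
  ring

lemma fiber_ge {k : ℕ} (c : Fin k → Fin p) {a0 a1 : Fin k} (h01 : a0 ≠ a1) (i : Fin p) :
    delta (c a0) i + delta (c a1) i ≤ cellConfig c i := by
  by_cases h0 : c a0 = i <;> by_cases h1 : c a1 = i
  · have hsub : ({a0, a1} : Finset (Fin k)) ⊆ univ.filter (fun a => c a = i) := by
      intro a ha
      simp only [Finset.mem_insert, Finset.mem_singleton] at ha
      rcases ha with rfl | rfl <;> simp [h0, h1]
    have := Finset.card_le_card hsub
    rw [Finset.card_pair h01] at this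
    simp only [delta, if_pos h0.symm, if_pos h1.symm]
    exact this
  · have : 1 ≤ cellConfig c i := Finset.card_pos.mpr ⟨a0, by simp [h0]⟩
    simp only [delta, if_pos h0.symm, if_neg (mt Eq.symm h1)]
    omega
  · have : 1 ≤ cellConfig c i := Finset.card_pos.mpr ⟨a1, by simp [h1]⟩
    simp only [delta, if_neg (mt Eq.symm h0), if_pos h1.symm]
    omega
  · simp [delta, if_neg (mt Eq.symm h0), if_neg (mt Eq.symm h1)]

end cyc

theorem stmt11 {R : Type*} [CommRing R] {p : ℕ} (hp : 1 ≤ p)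
    (w : Fin p → R) (r : Fin p → Fin p → R) (rt : Fin p → Fin p → R)
    (n : ℕ) (hn : 3 ≤ n) (κ : Fin p → ℕ) (hκ : ∑ i, κ i = n) (t0 t : Fin p) :
    TcLast w r rt n κ t0 t =
      ∑ c ∈ Finset.univ.filter (fun c : Fin n → Fin p =>
          cellConfig c = κ ∧ c ⟨0, by omega⟩ = t0 ∧ c ⟨n - 1, by omega⟩ = t),
        cycW w r rt c := by
  obtain ⟨m, hm, rfl⟩ : ∃ m, 1 ≤ m ∧ n = m + 2 := ⟨n - 2, by omega, by omega⟩
  have hlast0 : (Fin.last m : Fin (m+1)) ≠ 0 := by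
    intro h
    have := congrArg Fin.val h
    simp only [Fin.val_last, Fin.val_zero] at this
    omega
  -- normalize the RHS filter
  rw [show (Finset.filter (fun c : Fin (m+2) → Fin p =>
      cellConfig c = κ ∧ c ⟨0, by omega⟩ = t0 ∧ c ⟨m + 2 - 1, by omega⟩ = t) univ)
    = Finset.filter (fun c : Fin (m+2) → Fin p =>
      (cellConfig c = κ ∧ c 0 = t0) ∧ c (Fin.last (m+1)) = t) univ from
    Finset.filter_congr fun c _ => by
      rw [show ((⟨0, by omega⟩ : Fin (m+2))) = 0 from Fin.ext (by simp),
        show ((⟨m + 2 - 1, by omega⟩ : Fin (m+2))) = Fin.last (m+1) from Fin.ext (by simp)]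
      tauto]
  unfold TcLast
  by_cases hκt : 1 ≤ κ t
  case neg =>
    rw [Finset.filter_eq_empty_iff.mpr (fun t' _ h => hκt (by
      have := h t
      simp [delta] at this
      omega)), Finset.sum_empty]
    rw [Finset.filter_eq_empty_iff.mpr, Finset.sum_empty]
    rintro c - ⟨⟨h1, h2⟩, h3⟩
    refine hκt ?_
    rw [← h1]
    exact Finset.card_pos.mpr ⟨Fin.last (m+1), by simp [h3]⟩
  case pos =>
    rw [sum_snoc_filter (p := p) (cycW w r rt)
      (fun c : Fin (m+2) → Fin p => cellConfig c = κ ∧ c 0 = t0) t]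
    rw [Finset.filter_congr (fun c' (_ : c' ∈ univ) => show _ ↔
        (cellConfig c' = κ - delta t ∧ c' 0 = t0) from
      and_congr (config_snoc_iff κ t hκt c') (by rw [snoc_zero']))]
    rw [Finset.sum_congr rfl (fun c' _ => cycW_snoc w r rt c' t)]
    rw [← Finset.sum_fiberwise_of_maps_to (g := fun c' : Fin (m+1) → Fin p =>
      c' (Fin.last m)) (fun c' _ => mem_univ _) _]
    rw [show (m + 2 - 1) = m + 1 from rfl]
    -- extend the t'-filter to univ on the LHS
    rw [Finset.sum_subset (Finset.filter_subset _ univ) (fun t' _ ht' => by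
      rw [Tc_eq]
      have hempty : Finset.filter (fun c : Fin (m+1) → Fin p =>
          cellConfig c = κ - delta t ∧ c 0 = t0 ∧ c (Fin.last m) = t') univ = ∅ := by
        rw [Finset.filter_eq_empty_iff]
        rintro c - ⟨h1, h2, h3⟩
        simp only [Finset.mem_filter, Finset.mem_univ, true_and] at ht'
        refine ht' fun i => ?_
        have hfib := fiber_ge c hlast0 i
        rw [h1, h3, h2] at hfib
        simp only [Pi.sub_apply] at hfib
        by_cases hit : i = t
        · subst hit
          simp [delta] at hfib ⊢
          omega
        · have : delta t i = 0 := by simp [delta, hit]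
          omega
      rw [hempty, Finset.sum_empty, zero_mul, zero_mul, zero_mul, zero_mul])]
    refine Finset.sum_congr rfl fun t' _ => ?_
    rw [Tc_eq, Finset.sum_mul, Finset.sum_mul, Finset.sum_mul, Finset.sum_mul]
    rw [Finset.filter_filter]
    refine Finset.sum_congr ?_ fun c' hc' => ?_
    · ext c'
      simp only [Finset.mem_filter, Finset.mem_univ, true_and]
      tauto
    simp only [Finset.mem_filter, Finset.mem_univ, true_and] at hc'
    obtain ⟨⟨h1, h2⟩, h3⟩ := hc'
    rw [h3, h2]
    congr 1
    symm
    rw [Finset.prod_congr rfl (fun (a : Fin (m+1)) _ => if_congr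
      (and_congr
        (not_congr (show ((a : ℕ) = m) ↔ a = Fin.last m by rw [Fin.ext_iff, Fin.val_last])
        )
        (not_congr (show ((a : ℕ) = 0) ↔ a = 0 by rw [Fin.ext_iff]; simp)))
      rfl rfl)]
    rw [prod_ite_ne2 c' hlast0 (fun i => r i t)]
    refine Finset.prod_congr rfl fun i _ => ?_
    rw [h1, h3, h2]
    rfl
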